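/- arXiv:2304.10653 — 3 statements merged into one kernel-verified Lean document; each statement's English description precedes it below -/
import Mathlib

section
/- Let S and P be linear subspaces of a finite-dimensional real inner product space E and let u ∈ P with ‖u‖ = 1 and π_S u ≠ 0. Then |‖π_{S^⊥} u‖² − ‖π_{P^⊥}(π_S u)‖²/‖π_S u‖²| ≤ 8‖π_S − π_P‖⁴, where ‖π_S − π_P‖ denotes the operator norm. -/
theorem stmt6_arith (a s b p q ε : ℝ) (hε0 : 0 ≤ ε) (hs0 : 0 < s) (ha0 : 0 ≤ a)
    (hb0 : 0 ≤ b) (hp0 : 0 ≤ p) (haε : a ≤ ε) (hsa : s ^ 2 + a ^ 2 = 1)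
    (hbε : b ≤ ε * s) (hpε : p ≤ ε * a) (hbap : b ^ 2 + p ^ 2 = a ^ 2)
    (hq : q * s ^ 2 = b ^ 2) (hq0 : 0 ≤ q) :
    |a ^ 2 - q| ≤ 8 * ε ^ 4 := by
  have hqε : q ≤ ε ^ 2 := by
    have h := mul_le_mul hbε hbε hb0 (by positivity)
    have hs2 : 0 < s ^ 2 := by positivity
    nlinarith
  have ha2 : a ^ 2 ≤ ε ^ 2 := by nlinarith
  rcases le_or_gt (1/2 : ℝ) (ε ^ 2) with hcase | hcase
  · have h4 : ε ^ 2 ≤ 2 * ε ^ 4 := by nlinarith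
    rw [abs_le]
    constructor <;> nlinarith
  · have hs2 : (1:ℝ)/2 ≤ s ^ 2 := by nlinarith
    have key : (a ^ 2 - q) * s ^ 2 = p ^ 2 - a ^ 4 := by
      linear_combination a ^ 2 * hsa - hq - hbap
    have hpe4 : p ^ 2 ≤ ε ^ 4 := by
      have h1 : p ^ 2 ≤ (ε * a) ^ 2 := pow_le_pow_left₀ hp0 hpε 2
      nlinarith [mul_le_mul_of_nonneg_left ha2 (sq_nonneg ε)]
    have ha4 : a ^ 4 ≤ ε ^ 4 := by
      have h1 : (a ^ 2) ^ 2 ≤ (ε ^ 2) ^ 2 := pow_le_pow_left₀ (sq_nonneg a) ha2 2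
      nlinarith
    have habs : |a ^ 2 - q| * s ^ 2 ≤ ε ^ 4 := by
      rw [← abs_of_pos (show (0:ℝ) < s ^ 2 by positivity), ← abs_mul, key, abs_le]
      constructor <;> linarith [sq_nonneg p, pow_nonneg ha0 4]
    have hh : |a ^ 2 - q| * (1/2) ≤ |a ^ 2 - q| * s ^ 2 :=
      mul_le_mul_of_nonneg_left hs2 (abs_nonneg _)
    linarith [pow_nonneg hε0 4]


/-- The orthogonal projection of `E` onto the subspace `V`, as a map `E → E`. -/
noncomputable def proj {E : Type*} [NormedAddCommGroup E] [InnerProductSpace ℝ E]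
    (V : Submodule ℝ E) [V.HasOrthogonalProjection] : E →L[ℝ] E :=
  V.subtypeL.comp V.orthogonalProjectionOnto

theorem proj_apply {E : Type*} [NormedAddCommGroup E] [InnerProductSpace ℝ E]
    (V : Submodule ℝ E) [V.HasOrthogonalProjection] (x : E) :
    proj V x = (V.orthogonalProjectionOnto x : E) := rfl

theorem proj_add_proj_orthogonal {E : Type*} [NormedAddCommGroup E] [InnerProductSpace ℝ E]
    (V : Submodule ℝ E) [V.HasOrthogonalProjection] [Vᗮ.HasOrthogonalProjection] (x : E) :
    proj V x + proj Vᗮ x = x :=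
  Submodule.starProjection_add_starProjection_orthogonal (K := V) x

theorem proj_pythagoras {E : Type*} [NormedAddCommGroup E] [InnerProductSpace ℝ E]
    (V : Submodule ℝ E) [V.HasOrthogonalProjection] [Vᗮ.HasOrthogonalProjection] (x : E) :
    ‖x‖ ^ 2 = ‖proj V x‖ ^ 2 + ‖proj Vᗮ x‖ ^ 2 :=
  Submodule.norm_sq_eq_add_norm_sq_projection x V

/-- If `S` and `P` are linear subspaces of a finite-dimensional real inner product space `E`
and `u ∈ P` is a unit vector with `π_S u ≠ 0`, then
`|‖π_{S^⊥} u‖² − ‖π_{P^⊥}(π_S u)‖²/‖π_S u‖²| ≤ 8‖π_S − π_P‖⁴` (operator norm). -/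
theorem stmt6 {E : Type*} [NormedAddCommGroup E] [InnerProductSpace ℝ E]
    [FiniteDimensional ℝ E] (S P : Submodule ℝ E) (u : E) (hu : u ∈ P)
    (hu1 : ‖u‖ = 1) (hSu : proj S u ≠ 0) :
    |‖proj Sᗮ u‖ ^ 2 - ‖proj Pᗮ (proj S u)‖ ^ 2 / ‖proj S u‖ ^ 2| ≤
      8 * ‖proj S - proj P‖ ^ 4 := by
  set T : E →L[ℝ] E := proj S - proj P with hT
  set ε := ‖T‖ with hε
  set a := ‖proj Sᗮ u‖ with ha
  set s := ‖proj S u‖ with hs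
  set b := ‖proj Pᗮ (proj S u)‖ with hb
  set w := proj Sᗮ u with hw
  set p := ‖proj P w‖ with hp
  have hε0 : 0 ≤ ε := norm_nonneg _
  have hs0 : 0 < s := norm_pos_iff.mpr hSu
  have ha0 : 0 ≤ a := norm_nonneg _
  have hb0 : 0 ≤ b := norm_nonneg _
  have hp0 : 0 ≤ p := norm_nonneg _
  -- u ∈ P means proj P u = u and proj Pᗮ u = 0
  have hPu : proj P u = u := by
    exact Submodule.starProjection_eq_self_iff.mpr hu
  have hPcu : proj Pᗮ u = 0 := by
    simp [proj_apply, Submodule.orthogonalProjectionOnto_apply_of_mem_orthogonal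
      (Submodule.le_orthogonal_orthogonal P hu)]
  -- w = u - proj S u
  have hwval : w = u - proj S u := eq_sub_of_add_eq' (proj_add_proj_orthogonal S u)
  -- a ≤ ε
  have haε : a ≤ ε := by
    have : w = -(T u) := by rw [hwval, hT]; simp [hPu]
    calc a = ‖T u‖ := by rw [ha, this, norm_neg]
    _ ≤ ε * ‖u‖ := T.le_opNorm u
    _ = ε := by rw [hu1, mul_one]
  -- Pythagoras for u w.r.t. S : s² + a² = 1
  have hsa : s ^ 2 + a ^ 2 = 1 := by
    have := proj_pythagoras S u
    rw [hu1] at this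
    rw [hs, ha]; linarith
  -- proj S is idempotent on its image
  have hSS : proj S (proj S u) = proj S u := by
    exact Submodule.starProjection_mem_subspace_eq_self (K := S) (S.orthogonalProjectionOnto u)
  -- proj Pᗮ v = v - proj P v, so proj Pᗮ (proj S u) = T (proj S u)
  have hbε : b ≤ ε * s := by
    have h1 : proj Pᗮ (proj S u) = T (proj S u) := by
      have := proj_add_proj_orthogonal P (proj S u)
      rw [hT]; simp only [ContinuousLinearMap.sub_apply, hSS]
      rw [eq_sub_of_add_eq' this]
    calc b = ‖T (proj S u)‖ := by rw [hb, h1]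
    _ ≤ ε * s := T.le_opNorm _
  -- proj S w = 0 since w ∈ Sᗮ
  have hSw : proj S w = 0 := by
    exact congrArg Subtype.val (Submodule.orthogonalProjectionOnto_apply_of_mem_orthogonal
      (K := S) (v := proj Sᗮ u) (Submodule.coe_mem _))
  -- p ≤ ε * a
  have hpε : p ≤ ε * a := by
    have h1 : proj P w = -(T w) := by rw [hT]; simp [hSw]
    calc p = ‖T w‖ := by rw [hp, h1, norm_neg]
    _ ≤ ε * a := T.le_opNorm _
  -- b² = a² - p² : proj Pᗮ (proj S u) = - proj Pᗮ w and Pythagoras for w w.r.t. P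
  have hbap : b ^ 2 + p ^ 2 = a ^ 2 := by
    have h1 : proj Pᗮ (proj S u) = -(proj Pᗮ w) := by
      have : proj S u = u - w := by rw [hwval]; abel
      rw [this, map_sub, hPcu]; abel
    have h2 : b = ‖proj Pᗮ w‖ := by rw [hb, h1, norm_neg]
    have := proj_pythagoras P w
    rw [← ha, ← hp, ← h2] at this
    linarith
  -- now pure arithmetic
  have hq : b ^ 2 / s ^ 2 * s ^ 2 = b ^ 2 := div_mul_cancel₀ _ (by positivity)
  exact stmt6_arith a s b p (b ^ 2 / s ^ 2) ε hε0 hs0 ha0 hb0 hp0 haε hsa hbε hpε hbap hq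
    (by positivity)
end

section
/- There exists a constant C = C(n) ∈ (0,∞) such that for all n-dimensional linear subspaces S and P of ℝ^{n+m} with ‖π_S − π_P‖_F ≤ 1 and every orthonormal basis τ₁, …, τₙ of S, the Gram matrix [⟨π_P τᵢ, π_P τⱼ⟩]_{i,j=1}^n satisfies |√(det [⟨π_P τᵢ, π_P τⱼ⟩]) − 1 + (1/4)‖π_S − π_P‖_F²| ≤ C ‖π_S − π_P‖_F⁴. -/
/-- The squared Frobenius (Hilbert–Schmidt) norm of a linear map `T : E → E`,
computed via an orthonormal basis of `E`. -/
noncomputable def frobSq {E : Type*} [NormedAddCommGroup E] [InnerProductSpace ℝ E]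
    [FiniteDimensional ℝ E] (T : E →L[ℝ] E) : ℝ :=
  ∑ i, ‖T (stdOrthonormalBasis ℝ E i)‖ ^ 2

section Aux

open RealInnerProductSpace

variable {E : Type*} [NormedAddCommGroup E] [InnerProductSpace ℝ E]

lemma aux_proj_apply (V : Submodule ℝ E) [V.HasOrthogonalProjection] (x : E) :
    proj V x = (V.orthogonalProjectionOnto x : E) := rfl

lemma aux_proj_coe (V : Submodule ℝ E) [V.HasOrthogonalProjection] (v : V) :
    proj V (v : E) = (v : E) := by
  simp [aux_proj_apply, Submodule.orthogonalProjectionOnto_mem_subspace_eq_self]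

lemma aux_proj_inner_left (V : Submodule ℝ E) [V.HasOrthogonalProjection] (x y : E) :
    ⟪proj V x, y⟫ = ⟪x, proj V y⟫ :=
  Submodule.inner_starProjection_left_eq_right V x y

lemma aux_proj_proj (V : Submodule ℝ E) [V.HasOrthogonalProjection] (x : E) :
    proj V (proj V x) = proj V x :=
  aux_proj_coe V (V.orthogonalProjectionOnto x)

lemma aux_inner_proj_proj (V : Submodule ℝ E) [V.HasOrthogonalProjection] (x y : E) :
    ⟪proj V x, proj V y⟫ = ⟪x, proj V y⟫ := by
  rw [aux_proj_inner_left, aux_proj_proj]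

lemma aux_inner_proj_sum {ι : Type*} [Fintype ι] (V : Submodule ℝ E)
    [V.HasOrthogonalProjection] (c : OrthonormalBasis ι ℝ V) (x y : E) :
    ⟪proj V x, y⟫ = ∑ i, ⟪(c i : E), x⟫ * ⟪(c i : E), y⟫ := by
  have key : ∀ z : E, ∀ i, ⟪c i, V.orthogonalProjectionOnto z⟫ = ⟪(c i : E), z⟫ := by
    intro z i
    rw [Submodule.coe_inner, ← aux_proj_apply, ← aux_proj_inner_left, aux_proj_coe]
  calc ⟪proj V x, y⟫ = ⟪x, proj V y⟫ := aux_proj_inner_left V x y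
    _ = ⟪proj V x, proj V y⟫ := (aux_inner_proj_proj V x y).symm
    _ = ⟪V.orthogonalProjectionOnto x, V.orthogonalProjectionOnto y⟫ := by
        rw [Submodule.coe_inner, aux_proj_apply, aux_proj_apply]
    _ = ∑ i, ⟪V.orthogonalProjectionOnto x, c i⟫ * ⟪c i, V.orthogonalProjectionOnto y⟫ :=
        (c.sum_inner_mul_inner _ _).symm
    _ = ∑ i, ⟪(c i : E), x⟫ * ⟪(c i : E), y⟫ := by
        refine Finset.sum_congr rfl fun i _ => ?_
        rw [show (inner ℝ ((V.orthogonalProjectionOnto) x) (c i) : ℝ)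
            = inner ℝ (c i) ((V.orthogonalProjectionOnto) x) from real_inner_comm _ _, key, key]

/-- key trace identity: sum over an orthonormal basis of `E` of
`⟪proj V e, proj W e⟫` equals `∑ i, ⟪c i, proj W (c i)⟫` for an ON basis `c` of `V`. -/
lemma aux_sum_inner_proj_proj {ι κ : Type*} [Fintype ι] [Fintype κ]
    (V W : Submodule ℝ E) [V.HasOrthogonalProjection] [W.HasOrthogonalProjection]
    (c : OrthonormalBasis ι ℝ V) (b : OrthonormalBasis κ ℝ E) :
    ∑ e, ⟪proj V (b e), proj W (b e)⟫ = ∑ i, ⟪(c i : E), proj W (c i : E)⟫ := by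
  have h1 : ∀ e, ⟪proj V (b e), proj W (b e)⟫
      = ∑ i, ⟪(c i : E), b e⟫ * ⟪proj W (c i : E), b e⟫ := by
    intro e
    rw [aux_inner_proj_sum V c]
    refine Finset.sum_congr rfl fun i _ => ?_
    congr 1
    rw [← aux_proj_inner_left]
  rw [Finset.sum_congr rfl fun e _ => h1 e, Finset.sum_comm]
  refine Finset.sum_congr rfl fun i _ => ?_
  have hpar := b.sum_inner_mul_inner ((c i : E)) (proj W (c i : E))
  rw [← hpar]
  refine Finset.sum_congr rfl fun e _ => ?_
  congr 1
  exact real_inner_comm _ _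

end Aux

section Scalar

lemma sqrt_one_sub_bound {x : ℝ} (h0 : 0 ≤ x) (h1 : x ≤ 1/2) :
    |Real.sqrt (1 - x) - (1 - x/2)| ≤ x^2 := by
  have hub : Real.sqrt (1-x) ≤ 1 - x/2 := by
    rw [show (1:ℝ) - x/2 = Real.sqrt ((1-x/2)^2) from (Real.sqrt_sq (by linarith)).symm]
    exact Real.sqrt_le_sqrt (by nlinarith)
  have hlb : 1 - x/2 - x^2 ≤ Real.sqrt (1-x) := by
    rcases le_or_gt (1 - x/2 - x^2) 0 with h | h
    · exact h.trans (Real.sqrt_nonneg _)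
    · rw [Real.le_sqrt h.le (by linarith)]
      nlinarith
  rw [abs_le]
  constructor <;> nlinarith

lemma sqrt_prod_eq {ι : Type*} (s : Finset ι) (f : ι → ℝ) (h : ∀ i ∈ s, 0 ≤ f i) :
    Real.sqrt (∏ i ∈ s, f i) = ∏ i ∈ s, Real.sqrt (f i) := by
  induction s using Finset.cons_induction with
  | empty => simp
  | cons a s ha ih =>
    rw [Finset.prod_cons, Finset.prod_cons, Real.sqrt_mul (h a (Finset.mem_cons_self a s)),
      ih fun i hi => h i (Finset.mem_cons_of_mem hi)]

lemma prod_sqrt_bound {ι : Type*} (s : Finset ι) (μ : ι → ℝ)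
    (h0 : ∀ i ∈ s, 0 ≤ μ i) (hs : ∑ i ∈ s, μ i ≤ 1/2) :
    |∏ i ∈ s, Real.sqrt (1 - μ i) - (1 - (∑ i ∈ s, μ i)/2)|
      ≤ s.card * (∑ i ∈ s, μ i)^2 := by
  induction s using Finset.cons_induction with
  | empty => simp
  | cons a s ha ih =>
    rw [Finset.prod_cons, Finset.sum_cons] at *
    set x := μ a with hxdef
    set t := ∑ i ∈ s, μ i with htdef
    set g := ∏ i ∈ s, Real.sqrt (1 - μ i) with hgdef
    have hx0 : 0 ≤ x := h0 a (Finset.mem_cons_self a s)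
    have ht0 : 0 ≤ t := Finset.sum_nonneg fun i hi => h0 i (Finset.mem_cons_of_mem hi)
    have hx2 : x ≤ 1/2 := by linarith
    have ht2 : t ≤ 1/2 := by linarith
    have hg0 : 0 ≤ g := Finset.prod_nonneg fun i _ => Real.sqrt_nonneg _
    have hg1 : g ≤ 1 := by
      apply Finset.prod_le_one (fun i _ => Real.sqrt_nonneg _)
      intro i hi
      calc Real.sqrt (1 - μ i) ≤ Real.sqrt 1 :=
            Real.sqrt_le_sqrt (by linarith [h0 i (Finset.mem_cons_of_mem hi)])
        _ = 1 := Real.sqrt_one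
    have hd1 : |Real.sqrt (1-x) - (1-x/2)| ≤ x^2 := sqrt_one_sub_bound hx0 hx2
    have hd2 : |g - (1-t/2)| ≤ s.card * t^2 :=
      ih (fun i hi => h0 i (Finset.mem_cons_of_mem hi)) (by linarith)
    have heq : Real.sqrt (1-x) * g - (1 - (x+t)/2)
        = (Real.sqrt (1-x) - (1-x/2)) * g + (1-x/2) * (g - (1-t/2)) + x*t/4 := by ring
    have habs : |Real.sqrt (1-x) * g - (1 - (x+t)/2)|
        ≤ x^2 * 1 + 1 * (s.card * t^2) + x*t/4 := by
      rw [heq]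
      refine (abs_add_le _ _).trans ?_
      have h1 : |(Real.sqrt (1-x) - (1-x/2)) * g| ≤ x^2 * 1 := by
        rw [abs_mul]
        exact mul_le_mul hd1 (by rw [abs_of_nonneg hg0]; exact hg1)
          (abs_nonneg _) (sq_nonneg _)
      have h2 : |(1-x/2) * (g - (1-t/2))| ≤ 1 * (s.card * t^2) := by
        rw [abs_mul]
        exact mul_le_mul (by rw [abs_of_nonneg (by linarith : (0:ℝ) ≤ 1-x/2)]; linarith)
          hd2 (abs_nonneg _) (by norm_num)
      have h3 : |x*t/4| = x*t/4 := abs_of_nonneg (by positivity)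
      calc |(Real.sqrt (1-x) - (1-x/2)) * g + (1-x/2) * (g - (1-t/2))| + |x*t/4|
          ≤ |(Real.sqrt (1-x) - (1-x/2)) * g| + |(1-x/2) * (g - (1-t/2))| + |x*t/4| := by
            linarith [abs_add_le ((Real.sqrt (1-x) - (1-x/2)) * g) ((1-x/2) * (g - (1-t/2)))]
        _ ≤ x^2 * 1 + 1 * (s.card * t^2) + x*t/4 := by rw [h3]; linarith
    rw [Finset.card_cons]
    push_cast
    have hcard : (0:ℝ) ≤ s.card := Nat.cast_nonneg _
    nlinarith [habs, sq_nonneg (x - t), sq_nonneg (x + t), mul_nonneg hx0 ht0,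
      mul_nonneg hcard (sq_nonneg t), mul_nonneg (mul_nonneg hcard hx0) hx0,
      mul_nonneg (mul_nonneg hcard hx0) ht0]

end Scalar

section Main

open RealInnerProductSpace

set_option maxHeartbeats 1000000 in
/-- There is `C = C(n) > 0` such that for all `n`-dimensional subspaces `S, P` of `ℝ^{n+m}`
with `‖π_S − π_P‖_F ≤ 1` and every orthonormal basis `τ₁, …, τₙ` of `S`, the Gram matrix
`[⟨π_P τᵢ, π_P τⱼ⟩]` satisfies `|√(det [⟨π_P τᵢ, π_P τⱼ⟩]) − 1 + ¼‖π_S − π_P‖_F²| ≤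
C ‖π_S − π_P‖_F⁴`. -/
theorem stmt16 (n : ℕ) :
    ∃ C : ℝ, 0 < C ∧
      ∀ (m : ℕ) (S P : Submodule ℝ (EuclideanSpace ℝ (Fin (n + m)))),
        Module.finrank ℝ S = n → Module.finrank ℝ P = n →
        Real.sqrt (frobSq (proj S - proj P)) ≤ 1 →
        ∀ τ : Fin n → EuclideanSpace ℝ (Fin (n + m)),
          Orthonormal ℝ τ → Submodule.span ℝ (Set.range τ) = S →
          |Real.sqrt (Matrix.det (Matrix.of fun i j =>
              (inner ℝ (proj P (τ i)) (proj P (τ j)) : ℝ))) - 1 +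
            (1 / 4) * frobSq (proj S - proj P)| ≤
          C * frobSq (proj S - proj P) ^ 2 := by
  classical
  refine ⟨(n:ℝ) + 1, by positivity, ?_⟩
  intro m S P hS hP hsqrt τ hτ hspan
  have hmem : ∀ i, τ i ∈ S := fun i => hspan ▸ Submodule.subset_span ⟨i, rfl⟩
  have hprojS : ∀ i, proj S (τ i) = τ i := fun i => aux_proj_coe S ⟨τ i, hmem i⟩
  -- orthonormal basis of S from τ
  let v : Fin n → S := fun i => ⟨τ i, hmem i⟩
  have hv_on : Orthonormal ℝ v := by
    rw [orthonormal_iff_ite] at hτ ⊢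
    intro i j
    rw [Submodule.coe_inner]
    exact hτ i j
  have hv_span : ⊤ ≤ Submodule.span ℝ (Set.range v) := by
    have himg : S.subtype '' Set.range v = Set.range τ := by
      ext x
      constructor
      · rintro ⟨y, ⟨i, rfl⟩, rfl⟩; exact ⟨i, rfl⟩
      · rintro ⟨i, rfl⟩; exact ⟨v i, ⟨i, rfl⟩, rfl⟩
    have hmap : Submodule.map S.subtype (Submodule.span ℝ (Set.range v))
        = Submodule.map S.subtype ⊤ := by
      rw [Submodule.map_span, himg, hspan, Submodule.map_subtype_top]
    exact (Submodule.map_injective_of_injective S.injective_subtype hmap).ge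
  let c : OrthonormalBasis (Fin n) ℝ S := OrthonormalBasis.mk hv_on hv_span
  have hc : ∀ i, (c i : EuclideanSpace ℝ (Fin (n + m))) = τ i := fun i => by
    simp only [c, OrthonormalBasis.coe_mk, v]
  let σ := stdOrthonormalBasis ℝ P
  let b := stdOrthonormalBasis ℝ (EuclideanSpace ℝ (Fin (n + m)))
  set t : ℝ := ∑ i, ⟪τ i, proj P (τ i)⟫ with ht
  -- the four trace sums
  have hSS : ∑ e, ⟪proj S (b e), proj S (b e)⟫ = (n:ℝ) := by
    rw [aux_sum_inner_proj_proj S S c b]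
    have h1 : ∀ i, ⟪(c i : EuclideanSpace ℝ (Fin (n + m))), proj S ((c i : EuclideanSpace ℝ (Fin (n + m))))⟫ = 1 := by
      intro i
      rw [hc, hprojS, real_inner_self_eq_norm_sq, hτ.1 i]
      norm_num
    rw [Finset.sum_congr rfl fun i _ => h1 i]
    simp
  have hPP : ∑ e, ⟪proj P (b e), proj P (b e)⟫ = (n:ℝ) := by
    rw [aux_sum_inner_proj_proj P P σ b]
    have h1 : ∀ i, ⟪(σ i : EuclideanSpace ℝ (Fin (n + m))), proj P ((σ i : EuclideanSpace ℝ (Fin (n + m))))⟫ = 1 := by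
      intro i
      rw [aux_proj_coe, real_inner_self_eq_norm_sq]
      have : ‖(σ i : EuclideanSpace ℝ (Fin (n + m)))‖ = 1 := by
        rw [show ‖(σ i : EuclideanSpace ℝ (Fin (n + m)))‖ = ‖σ i‖ from rfl, (stdOrthonormalBasis ℝ P).orthonormal.1 i]
      rw [this]; norm_num
    rw [Finset.sum_congr rfl fun i _ => h1 i]
    simp [hP]
  have hSP : ∑ e, ⟪proj S (b e), proj P (b e)⟫ = t := by
    rw [aux_sum_inner_proj_proj S P c b, ht]
    exact Finset.sum_congr rfl fun i _ => by rw [hc]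
  have hPS : ∑ e, ⟪proj P (b e), proj S (b e)⟫ = t := by
    rw [← hSP]
    exact Finset.sum_congr rfl fun e _ => real_inner_comm _ _
  -- frobSq = 2n - 2t
  have hfrob : frobSq (proj S - proj P) = 2*(n:ℝ) - 2*t := by
    have h1 : ∀ e, ‖(proj S - proj P) (b e)‖^2
        = ⟪proj S (b e), proj S (b e)⟫ - ⟪proj S (b e), proj P (b e)⟫
          - ⟪proj P (b e), proj S (b e)⟫ + ⟪proj P (b e), proj P (b e)⟫ := by
      intro e
      rw [← real_inner_self_eq_norm_sq]
      simp only [ContinuousLinearMap.sub_apply]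
      rw [inner_sub_sub_self]
    show (∑ e, ‖(proj S - proj P) (b e)‖^2) = 2*(n:ℝ) - 2*t
    rw [Finset.sum_congr rfl fun e _ => h1 e, Finset.sum_add_distrib,
      Finset.sum_sub_distrib, Finset.sum_sub_distrib, hSS, hSP, hPS, hPP]
    ring
  -- the matrix A
  set A : Matrix (Fin n) (Fin n) ℝ :=
    Matrix.of (fun i j => ⟪(proj S - proj P) (τ i), (proj S - proj P) (τ j)⟫) with hAdef
  have hent : ∀ i j, A i j
      = (if i = j then (1:ℝ) else 0) - ⟪proj P (τ i), proj P (τ j)⟫ := by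
    intro i j
    have hD : ∀ k, (proj S - proj P) (τ k) = τ k - proj P (τ k) := by
      intro k
      rw [ContinuousLinearMap.sub_apply, hprojS]
    have e1 : ⟪τ i, proj P (τ j)⟫ = ⟪proj P (τ i), proj P (τ j)⟫ :=
      (aux_inner_proj_proj P (τ i) (τ j)).symm
    have e2 : ⟪proj P (τ i), τ j⟫ = ⟪proj P (τ i), proj P (τ j)⟫ := by
      rw [aux_proj_inner_left]; exact e1
    have e3 : ⟪τ i, τ j⟫ = if i = j then (1:ℝ) else 0 := orthonormal_iff_ite.mp hτ i j
    show ⟪(proj S - proj P) (τ i), (proj S - proj P) (τ j)⟫ = _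
    rw [hD, hD, inner_sub_left, inner_sub_right, inner_sub_right, e1, e2, e3]
    ring
  have hGA : (Matrix.of fun i j => (inner ℝ (proj P (τ i)) (proj P (τ j)) : ℝ)) = 1 - A := by
    ext i j
    rw [Matrix.sub_apply, hent i j, Matrix.one_apply]
    simp
  have hherm : A.IsHermitian := by
    refine Matrix.IsHermitian.ext fun i j => ?_
    rw [star_trivial]
    show ⟪(proj S - proj P) (τ j), (proj S - proj P) (τ i)⟫
        = ⟪(proj S - proj P) (τ i), (proj S - proj P) (τ j)⟫
    exact real_inner_comm _ _
  have hpsd : A.PosSemidef := by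
    refine Matrix.posSemidef_iff_dotProduct_mulVec.mpr ⟨hherm, fun x => ?_⟩
    have key : dotProduct (star x) (A.mulVec x)
        = ⟪∑ i, x i • (proj S - proj P) (τ i), ∑ j, x j • (proj S - proj P) (τ j)⟫ := by
      rw [star_trivial, sum_inner]
      refine Finset.sum_congr rfl fun i _ => ?_
      rw [inner_sum]
      show x i * (∑ j, A i j * x j) = _
      rw [Finset.mul_sum]
      refine Finset.sum_congr rfl fun j _ => ?_
      rw [real_inner_smul_left, real_inner_smul_right]
      show x i * (⟪(proj S - proj P) (τ i), (proj S - proj P) (τ j)⟫ * x j) = _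
      ring
    rw [key]
    exact real_inner_self_nonneg
  -- eigenvalues
  set μ : Fin n → ℝ := hherm.eigenvalues with hμdef
  have hμ0 : ∀ i, 0 ≤ μ i := hpsd.eigenvalues_nonneg
  have hUmem := (Matrix.IsHermitian.eigenvectorUnitary hherm).2
  set U : Matrix (Fin n) (Fin n) ℝ :=
    (Matrix.IsHermitian.eigenvectorUnitary hherm : Matrix (Fin n) (Fin n) ℝ) with hUdef
  have hU1 : U * star U = 1 := Matrix.mem_unitaryGroup_iff.mp hUmem
  have hU2 : star U * U = 1 := Matrix.mem_unitaryGroup_iff'.mp hUmem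
  have hspec : A = U * Matrix.diagonal (RCLike.ofReal ∘ μ) * star U := hherm.spectral_theorem
  have hofReal : (RCLike.ofReal ∘ μ : Fin n → ℝ) = μ := by
    funext i; simp [RCLike.ofReal]
  have htr : A.trace = ∑ i, μ i := by
    calc A.trace = (U * Matrix.diagonal (RCLike.ofReal ∘ μ) * star U).trace := by rw [← hspec]
      _ = (star U * U * Matrix.diagonal (RCLike.ofReal ∘ μ)).trace := by
          rw [Matrix.trace_mul_cycle]
      _ = (Matrix.diagonal (RCLike.ofReal ∘ μ)).trace := by rw [hU2, Matrix.one_mul]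
      _ = ∑ i, μ i := by rw [hofReal, Matrix.trace_diagonal]
  have hdet : (1 - A).det = ∏ i, (1 - μ i) := by
    have h1 : (1 : Matrix (Fin n) (Fin n) ℝ) - A
        = U * (1 - Matrix.diagonal (RCLike.ofReal ∘ μ)) * star U := by
      rw [Matrix.mul_sub, Matrix.sub_mul, Matrix.mul_one, hU1, ← hspec]
    have h2 : (1 : Matrix (Fin n) (Fin n) ℝ) - Matrix.diagonal (RCLike.ofReal ∘ μ)
        = Matrix.diagonal (fun i => 1 - μ i) := by
      rw [hofReal, ← Matrix.diagonal_one, Matrix.diagonal_sub]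
    rw [h1, h2, Matrix.det_mul, Matrix.det_mul, Matrix.det_diagonal]
    have h3 : U.det * (star U).det = 1 := by
      rw [← Matrix.det_mul, hU1, Matrix.det_one]
    calc U.det * (∏ i, (1 - μ i)) * (star U).det
        = (U.det * (star U).det) * (∏ i, (1 - μ i)) := by ring
      _ = ∏ i, (1 - μ i) := by rw [h3, one_mul]
  have htrA : A.trace = (n:ℝ) - t := by
    have h1 : ∀ i, A i i = 1 - ⟪τ i, proj P (τ i)⟫ := fun i => by
      rw [hent i i, if_pos rfl, aux_inner_proj_proj]
    rw [Matrix.trace]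
    have h2 : ∀ i, A.diag i = 1 - ⟪τ i, proj P (τ i)⟫ := h1
    rw [Finset.sum_congr rfl fun i _ => h2 i, Finset.sum_sub_distrib, ht]
    simp
  -- final assembly
  set F := frobSq (proj S - proj P) with hF
  have hF0 : 0 ≤ F := by
    rw [hF]
    exact Finset.sum_nonneg fun e _ => sq_nonneg _
  have hF1 : F ≤ 1 := by
    nlinarith [Real.sq_sqrt hF0, hsqrt, Real.sqrt_nonneg F]
  have hsum : ∑ i, μ i = F / 2 := by
    rw [← htr, htrA, hfrob]
    ring
  have hsum' : ∑ i, μ i ≤ 1/2 := by rw [hsum]; linarith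
  have hμhalf : ∀ i, μ i ≤ 1/2 := by
    intro i
    calc μ i ≤ ∑ j, μ j := Finset.single_le_sum (fun j _ => hμ0 j) (Finset.mem_univ i)
      _ ≤ 1/2 := hsum'
  have hdetG : Matrix.det (Matrix.of fun i j =>
      (inner ℝ (proj P (τ i)) (proj P (τ j)) : ℝ)) = ∏ i, (1 - μ i) := by
    rw [hGA, hdet]
  have hsqrtdet : Real.sqrt (Matrix.det (Matrix.of fun i j =>
      (inner ℝ (proj P (τ i)) (proj P (τ j)) : ℝ))) = ∏ i, Real.sqrt (1 - μ i) := by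
    rw [hdetG]
    exact sqrt_prod_eq Finset.univ _ fun i _ => by linarith [hμhalf i]
  have hbound := prod_sqrt_bound Finset.univ μ (fun i _ => hμ0 i) hsum'
  rw [hsqrtdet]
  have heq2 : (∏ i, Real.sqrt (1 - μ i)) - 1 + 1/4 * F
      = (∏ i, Real.sqrt (1 - μ i)) - (1 - (∑ i, μ i)/2) := by
    rw [hsum]; ring
  rw [heq2]
  have hcard : (Finset.univ : Finset (Fin n)).card = n := by simp
  rw [hcard, hsum] at hbound
  calc |(∏ i, Real.sqrt (1 - μ i)) - (1 - (∑ i, μ i)/2)| ≤ (n:ℝ) * (F/2)^2 := by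
        rw [hsum]; exact hbound
    _ ≤ ((n:ℝ) + 1) * F^2 := by nlinarith [sq_nonneg F, (Nat.cast_nonneg n : (0:ℝ) ≤ n)]

end Main
end

section
/- Let S be an n-dimensional linear subspace of ℝⁿ × ℝᵐ with orthonormal basis τ₁, …, τₙ, let P₀ = ℝⁿ × {0}, let ψ : ℝ → ℝ be differentiable, and define the vector field ζ(x,y) = ψ(‖x‖)·(x,0) on ℝⁿ × ℝᵐ. Then at every point (x,y) with x ≠ 0, the tangential divergence of ζ along S satisfies ∑_{i=1}^n ⟨Dζ(x,y)[τᵢ], τᵢ⟩ = ψ(‖x‖)(n − (1/2)‖π_S − π_{P₀}‖_F²) + ψ'(‖x‖) ‖π_S(x,0)‖² / ‖x‖. -/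
/-- The Euclidean space `ℝⁿ × ℝᵐ` with the (L²) product inner product. -/
noncomputable abbrev E2 (n m : ℕ) :=
  WithLp 2 (EuclideanSpace ℝ (Fin n) × EuclideanSpace ℝ (Fin m))

/-- The point `(x, y)` of `ℝⁿ × ℝᵐ`. -/
noncomputable def mk2 {n m : ℕ} (x : EuclideanSpace ℝ (Fin n))
    (y : EuclideanSpace ℝ (Fin m)) : E2 n m :=
  (WithLp.linearEquiv 2 ℝ _).symm (x, y)

/-- The first component `x` of a point `(x,y)` of `ℝⁿ × ℝᵐ`. -/
noncomputable def fst2 {n m : ℕ} (p : E2 n m) : EuclideanSpace ℝ (Fin n) :=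
  (WithLp.equiv 2 (EuclideanSpace ℝ (Fin n) × EuclideanSpace ℝ (Fin m)) p).1

/-- The second component `y` of a point `(x,y)` of `ℝⁿ × ℝᵐ`. -/
noncomputable def snd2 {n m : ℕ} (p : E2 n m) : EuclideanSpace ℝ (Fin m) :=
  (WithLp.equiv 2 (EuclideanSpace ℝ (Fin n) × EuclideanSpace ℝ (Fin m)) p).2

/-- The plane `P₀ = ℝⁿ × {0}` as a linear subspace of `ℝⁿ × ℝᵐ`. -/
noncomputable def P0 (n m : ℕ) : Submodule ℝ (E2 n m) :=
  (Submodule.prod (⊤ : Submodule ℝ (EuclideanSpace ℝ (Fin n)))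
    (⊥ : Submodule ℝ (EuclideanSpace ℝ (Fin m)))).comap
      (WithLp.linearEquiv 2 ℝ _).toLinearMap

open RealInnerProductSpace


lemma hasFDerivAt_norm_ne {E : Type*} [NormedAddCommGroup E] [InnerProductSpace ℝ E]
    {x : E} (hx : x ≠ 0) :
    HasFDerivAt (fun y : E => ‖y‖) (‖x‖⁻¹ • innerSL ℝ x) x := by
  have hn : ‖x‖ ≠ 0 := norm_ne_zero_iff.mpr hx
  have hns : ‖x‖ ^ 2 ≠ 0 := pow_ne_zero _ hn
  have h1 : HasFDerivAt (fun y : E => ‖y‖ ^ 2) (2 • innerSL ℝ x) x :=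
    (hasStrictFDerivAt_norm_sq x).hasFDerivAt
  have h2 := (Real.hasDerivAt_sqrt hns).comp_hasFDerivAt x h1
  have h3 : ((fun t => Real.sqrt t) ∘ fun y : E => ‖y‖ ^ 2) = fun y : E => ‖y‖ := by
    funext y; simp [Function.comp, Real.sqrt_sq (norm_nonneg y)]
  rw [h3] at h2
  refine h2.congr_fderiv (Eq.symm ?_)
  rw [Real.sqrt_sq (norm_nonneg x)]
  ext v
  simp only [ContinuousLinearMap.smul_apply, smul_eq_mul, two_smul,
    ContinuousLinearMap.add_apply]
  field_simp
  ring

section Generic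
variable {E : Type*} [NormedAddCommGroup E] [InnerProductSpace ℝ E] [FiniteDimensional ℝ E]

lemma proj_eq_sum {k : ℕ} {w : Fin k → E} (hw : Orthonormal ℝ w)
    {V : Submodule ℝ E} (hsp : Submodule.span ℝ (Set.range w) = V) (e : E) :
    proj V e = ∑ i, ⟪w i, e⟫ • w i := by
  apply Submodule.eq_starProjection_of_mem_of_inner_eq_zero
  · exact Submodule.sum_mem _ fun i _ => Submodule.smul_mem _ _
      (hsp ▸ Submodule.subset_span (Set.mem_range_self i))
  · intro u hu
    rw [← hsp] at hu
    induction hu using Submodule.span_induction with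
    | mem z hz =>
      obtain ⟨j, rfl⟩ := hz
      rw [inner_sub_left, sum_inner]
      have : ∀ i, ⟪⟪w i, e⟫ • w i, w j⟫ = if j = i then ⟪w i, e⟫ else 0 := by
        intro i
        rw [real_inner_smul_left]
        rcases eq_or_ne j i with rfl | h
        · simp [real_inner_self_eq_norm_sq, hw.1 j]
        · simp [h, hw.2 (Ne.symm h)]
      rw [Finset.sum_congr rfl fun i _ => this i]
      simp [real_inner_comm]
    | zero => simp
    | add _ _ _ _ h1 h2 => rw [inner_add_right, h1, h2, add_zero]
    | smul a _ _ h1 => rw [inner_smul_right, h1, mul_zero]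

lemma proj_normsq {k : ℕ} {w : Fin k → E} (hw : Orthonormal ℝ w)
    {V : Submodule ℝ E} (hsp : Submodule.span ℝ (Set.range w) = V) (e : E) :
    ‖proj V e‖ ^ 2 = ∑ i, ⟪w i, e⟫ ^ 2 := by
  rw [proj_eq_sum hw hsp, ← real_inner_self_eq_norm_sq, sum_inner]
  refine Finset.sum_congr rfl fun i _ => ?_
  rw [real_inner_smul_left, hw.inner_right_fintype, sq]

lemma sum_proj_normsq_std {k : ℕ} {w : Fin k → E} (hw : Orthonormal ℝ w)
    {V : Submodule ℝ E} (hsp : Submodule.span ℝ (Set.range w) = V) :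
    ∑ e, ‖proj V (stdOrthonormalBasis ℝ E e)‖ ^ 2 = (k : ℝ) := by
  calc ∑ e, ‖proj V (stdOrthonormalBasis ℝ E e)‖ ^ 2
      = ∑ e, ∑ i, ⟪w i, stdOrthonormalBasis ℝ E e⟫ ^ 2 := by
        exact Finset.sum_congr rfl fun e _ => proj_normsq hw hsp _
    _ = ∑ i, ∑ e, ⟪w i, stdOrthonormalBasis ℝ E e⟫ *
          ⟪stdOrthonormalBasis ℝ E e, w i⟫ := by
        rw [Finset.sum_comm]
        exact Finset.sum_congr rfl fun i _ => Finset.sum_congr rfl fun e _ => by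
          rw [sq, real_inner_comm]
    _ = ∑ i : Fin k, (1 : ℝ) := by
        refine Finset.sum_congr rfl fun i _ => ?_
        rw [(stdOrthonormalBasis ℝ E).sum_inner_mul_inner (w i) (w i)]
        simp [real_inner_self_eq_norm_sq, hw.1 i]
    _ = (k : ℝ) := by simp

lemma sum_proj_cross {k l : ℕ} {w : Fin k → E} (hw : Orthonormal ℝ w)
    {V : Submodule ℝ E} (hspV : Submodule.span ℝ (Set.range w) = V)
    {v : Fin l → E} (hv : Orthonormal ℝ v)
    {W : Submodule ℝ E} (hspW : Submodule.span ℝ (Set.range v) = W) :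
    ∑ e, ⟪proj V (stdOrthonormalBasis ℝ E e), proj W (stdOrthonormalBasis ℝ E e)⟫
      = ∑ j, ⟪proj V (v j), v j⟫ := by
  have hsa : ∀ (u z : E), ⟪proj V u, z⟫ = ⟪u, proj V z⟫ := fun u z =>
    V.inner_starProjection_left_eq_right u z
  calc ∑ e, ⟪proj V (stdOrthonormalBasis ℝ E e), proj W (stdOrthonormalBasis ℝ E e)⟫
      = ∑ e, ∑ j, ⟪v j, stdOrthonormalBasis ℝ E e⟫ *
          ⟪stdOrthonormalBasis ℝ E e, proj V (v j)⟫ := by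
        refine Finset.sum_congr rfl fun e _ => ?_
        rw [proj_eq_sum hv hspW, inner_sum]
        refine Finset.sum_congr rfl fun j _ => ?_
        rw [real_inner_smul_right, hsa, mul_comm]
    _ = ∑ j, ⟪v j, proj V (v j)⟫ := by
        rw [Finset.sum_comm]
        refine Finset.sum_congr rfl fun j _ => ?_
        exact (stdOrthonormalBasis ℝ E).sum_inner_mul_inner _ _
    _ = ∑ j, ⟪proj V (v j), v j⟫ := by
        exact Finset.sum_congr rfl fun j _ => real_inner_comm _ _

lemma frobSq_proj_sub {k l : ℕ} {w : Fin k → E} (hw : Orthonormal ℝ w)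
    {V : Submodule ℝ E} (hspV : Submodule.span ℝ (Set.range w) = V)
    {v : Fin l → E} (hv : Orthonormal ℝ v)
    {W : Submodule ℝ E} (hspW : Submodule.span ℝ (Set.range v) = W) :
    frobSq (proj V - proj W) = (k : ℝ) + l - 2 * ∑ j, ⟪proj V (v j), v j⟫ := by
  have expand : ∀ e, ‖(proj V - proj W) (stdOrthonormalBasis ℝ E e)‖ ^ 2 =
      ‖proj V (stdOrthonormalBasis ℝ E e)‖ ^ 2 -
        2 * ⟪proj V (stdOrthonormalBasis ℝ E e), proj W (stdOrthonormalBasis ℝ E e)⟫ +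
        ‖proj W (stdOrthonormalBasis ℝ E e)‖ ^ 2 := by
    intro e
    rw [ContinuousLinearMap.sub_apply, norm_sub_sq_real]
  rw [frobSq, Finset.sum_congr rfl fun e _ => expand e, Finset.sum_add_distrib,
    Finset.sum_sub_distrib, sum_proj_normsq_std hw hspV, sum_proj_normsq_std hv hspW,
    ← Finset.mul_sum, sum_proj_cross hw hspV hv hspW]
  ring

lemma cross_symm {k l : ℕ} {w : Fin k → E} (hw : Orthonormal ℝ w)
    {V : Submodule ℝ E} (hspV : Submodule.span ℝ (Set.range w) = V)
    {v : Fin l → E} (hv : Orthonormal ℝ v)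
    {W : Submodule ℝ E} (hspW : Submodule.span ℝ (Set.range v) = W) :
    ∑ j, ⟪proj V (v j), v j⟫ = ∑ i, ⟪proj W (w i), w i⟫ := by
  rw [← sum_proj_cross hw hspV hv hspW, ← sum_proj_cross hv hspW hw hspV]
  exact Finset.sum_congr rfl fun e _ => real_inner_comm _ _

end Generic


variable {n m : ℕ}

noncomputable def fst2L (n m : ℕ) : E2 n m →L[ℝ] EuclideanSpace ℝ (Fin n) :=
  (ContinuousLinearMap.fst ℝ _ _).comp
    (WithLp.prodContinuousLinearEquiv 2 ℝ _ _).toContinuousLinearMap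

noncomputable def mkxL (n m : ℕ) : EuclideanSpace ℝ (Fin n) →L[ℝ] E2 n m :=
  ((WithLp.prodContinuousLinearEquiv 2 ℝ _ _).symm.toContinuousLinearMap).comp
    (ContinuousLinearMap.inl ℝ _ _)

lemma fst2L_apply (p : E2 n m) : fst2L n m p = fst2 p := rfl
lemma mkxL_apply (a : EuclideanSpace ℝ (Fin n)) : mkxL n m a = mk2 a 0 := rfl
lemma fst2_mk2 (a : EuclideanSpace ℝ (Fin n)) (b : EuclideanSpace ℝ (Fin m)) :
    fst2 (mk2 a b) = a := rfl
lemma snd2_mk2 (a : EuclideanSpace ℝ (Fin n)) (b : EuclideanSpace ℝ (Fin m)) :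
    snd2 (mk2 a b) = b := rfl

lemma inner_mk2 (a c : EuclideanSpace ℝ (Fin n)) (b d : EuclideanSpace ℝ (Fin m)) :
    ⟪mk2 a b, mk2 c d⟫ = ⟪a, c⟫ + ⟪b, d⟫ := rfl

lemma mem_P0_iff (p : E2 n m) : p ∈ P0 n m ↔ snd2 p = 0 := by
  constructor
  · intro h; exact h.2
  · intro h; exact ⟨trivial, h⟩

lemma mk2_eta (p : E2 n m) : mk2 (fst2 p) (snd2 p) = p := rfl

lemma norm_mk2_zero (a : EuclideanSpace ℝ (Fin n)) : ‖(mk2 a 0 : E2 n m)‖ = ‖a‖ := by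
  have h := WithLp.prod_norm_sq_eq_of_L2 (mk2 a 0 : E2 n m)
  have : ‖(mk2 a 0 : E2 n m)‖ ^ 2 = ‖a‖ ^ 2 := by
    have h2 : ‖(mk2 a 0 : E2 n m)‖ ^ 2 = ‖a‖ ^ 2 + ‖(0 : EuclideanSpace ℝ (Fin m))‖ ^ 2 := h
    simpa using h2
  have h1 : (0:ℝ) ≤ ‖(mk2 a 0 : E2 n m)‖ := norm_nonneg _
  nlinarith [norm_nonneg a]

lemma proj_P0_apply (p : E2 n m) : proj (P0 n m) p = mk2 (fst2 p) 0 := by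
  apply Submodule.eq_starProjection_of_mem_of_inner_eq_zero
  · rw [mem_P0_iff, snd2_mk2]
  · intro w hw
    rw [mem_P0_iff] at hw
    have : p - mk2 (fst2 p) 0 = mk2 0 (snd2 p) := by
      apply (WithLp.linearEquiv 2 ℝ _).injective
      rw [map_sub]
      ext <;> simp [mk2, fst2, snd2]
    rw [this, ← mk2_eta w, hw, inner_mk2]
    simp

noncomputable def uP0 (n m : ℕ) : Fin n → E2 n m :=
  fun j => mk2 (EuclideanSpace.single j 1) 0

lemma uP0_orthonormal : Orthonormal ℝ (uP0 n m) := by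
  rw [orthonormal_iff_ite]
  intro i j
  rw [uP0, uP0, inner_mk2, inner_zero_left, add_zero,
    EuclideanSpace.inner_single_left]
  simp [EuclideanSpace.single_apply, eq_comm]

lemma uP0_span : Submodule.span ℝ (Set.range (uP0 n m)) = P0 n m := by
  apply le_antisymm
  · rw [Submodule.span_le]
    rintro _ ⟨j, rfl⟩
    rw [SetLike.mem_coe, mem_P0_iff, uP0, snd2_mk2]
  · intro p hp
    rw [mem_P0_iff] at hp
    have : p = ∑ j, fst2 p j • uP0 n m j := by
      have h1 : ∑ j, fst2 p j • EuclideanSpace.single j 1 = fst2 p := by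
        simpa [EuclideanSpace.basisFun_apply, EuclideanSpace.basisFun_repr] using
          (EuclideanSpace.basisFun (Fin n) ℝ).sum_repr (fst2 p)
      calc p = mk2 (fst2 p) 0 := by rw [← mk2_eta p, hp]; rfl
        _ = mkxL n m (∑ j, fst2 p j • EuclideanSpace.single j 1) := by
            rw [h1, mkxL_apply]
        _ = ∑ j, fst2 p j • uP0 n m j := by
            rw [map_sum]
            exact Finset.sum_congr rfl fun j _ => by rw [map_smul, mkxL_apply]; rfl
    rw [this]
    exact Submodule.sum_mem _ fun j _ => Submodule.smul_mem _ _
      (Submodule.subset_span (Set.mem_range_self j))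

set_option synthInstance.maxHeartbeats 400000 in
set_option maxHeartbeats 1000000 in
/-- Tangential divergence along an `n`-dimensional subspace `S` of `ℝⁿ × ℝᵐ` (with orthonormal
basis `τ₁,…,τₙ`) of the vector field `ζ(x,y) = ψ(‖x‖)·(x,0)`: at every point `(x,y)` with
`x ≠ 0`, `∑ᵢ ⟨Dζ(x,y)[τᵢ], τᵢ⟩ = ψ(‖x‖)(n − ½‖π_S − π_{P₀}‖_F²) + ψ'(‖x‖)‖π_S(x,0)‖²/‖x‖`. -/
theorem stmt18 (n m : ℕ) (S : Submodule ℝ (E2 n m))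
    (τ : Fin n → E2 n m) (hτ : Orthonormal ℝ τ)
    (hspan : Submodule.span ℝ (Set.range τ) = S)
    (ψ : ℝ → ℝ) (hψ : Differentiable ℝ ψ)
    (x : EuclideanSpace ℝ (Fin n)) (y : EuclideanSpace ℝ (Fin m)) (hx : x ≠ 0) :
    ∑ i, (inner ℝ
        (fderiv ℝ (fun p : E2 n m => ψ ‖fst2 p‖ • mk2 (fst2 p) 0) (mk2 x y) (τ i))
        (τ i) : ℝ) =
      ψ ‖x‖ * (n - (1 / 2) * frobSq (proj S - proj (P0 n m))) +
        deriv ψ ‖x‖ * ‖proj S (mk2 x 0)‖ ^ 2 / ‖x‖ := by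
  have hr : ‖x‖ ≠ 0 := norm_ne_zero_iff.mpr hx
  -- Derivative computation
  have hx' : fst2L n m (mk2 x y) = x := rfl
  have hfst : HasFDerivAt (fun p : E2 n m => ‖fst2L n m p‖)
      ((‖x‖⁻¹ • innerSL ℝ x).comp (fst2L n m)) (mk2 x y) := by
    have h0 : fst2L n m (mk2 x y) ≠ 0 := by rw [hx']; exact hx
    have h := (hasFDerivAt_norm_ne h0).comp (mk2 x y) (fst2L n m).hasFDerivAt
    rw [hx'] at h
    exact h
  have hc : HasFDerivAt (fun p : E2 n m => ψ ‖fst2L n m p‖)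
      (deriv ψ ‖x‖ • ((‖x‖⁻¹ • innerSL ℝ x).comp (fst2L n m))) (mk2 x y) := by
    have h2 : HasDerivAt ψ (deriv ψ ‖x‖) ‖fst2L n m (mk2 x y)‖ := by
      rw [hx']; exact (hψ ‖x‖).hasDerivAt
    exact h2.comp_hasFDerivAt (mk2 x y) hfst
  have hc' : HasFDerivAt (fun p : E2 n m => ψ ‖fst2 p‖)
      (deriv ψ ‖x‖ • ((‖x‖⁻¹ • innerSL ℝ x).comp (fst2L n m))) (mk2 x y) := hc
  have hQ : HasFDerivAt (fun p : E2 n m => mk2 (fst2 p) 0)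
      ((mkxL n m).comp (fst2L n m)) (mk2 x y) :=
    ((mkxL n m).comp (fst2L n m)).hasFDerivAt
  have hζ : HasFDerivAt (fun p : E2 n m => ψ ‖fst2 p‖ • mk2 (fst2 p) 0) _ (mk2 x y) :=
    hc'.smul hQ
  haveI : ContinuousSMul ℝ (E2 n m) := inferInstance
  have hD := hζ.fderiv
  rw [hD]
  -- pointwise formula for each term
  have key : ∀ i, (inner ℝ
      (((ψ ‖fst2 (mk2 x y)‖ • (mkxL n m).comp (fst2L n m) +
        (deriv ψ ‖x‖ • ((‖x‖⁻¹ • innerSL ℝ x).comp (fst2L n m))).smulRight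
          (mk2 (fst2 (mk2 x y)) 0) : E2 n m →L[ℝ] E2 n m)) (τ i)) (τ i) : ℝ) =
      ψ ‖x‖ * ⟪proj (P0 n m) (τ i), τ i⟫ +
        (deriv ψ ‖x‖ * ‖x‖⁻¹) * ⟪mk2 x 0, τ i⟫ ^ 2 := by
    intro i
    have h1 : fst2 (mk2 x y) = x := fst2_mk2 x y
    have h2 : ((mkxL n m).comp (fst2L n m)) (τ i) = proj (P0 n m) (τ i) := by
      rw [ContinuousLinearMap.comp_apply, fst2L_apply, mkxL_apply, proj_P0_apply]
    have h3 : ⟪x, fst2 (τ i)⟫ = ⟪mk2 x 0, τ i⟫ := by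
      conv_rhs => rw [← mk2_eta (τ i)]
      rw [inner_mk2, inner_zero_left, add_zero]
    rw [ContinuousLinearMap.add_apply, inner_add_left,
      ContinuousLinearMap.smul_apply, real_inner_smul_left, h1, h2,
      ContinuousLinearMap.smulRight_apply, real_inner_smul_left]
    simp only [ContinuousLinearMap.smul_apply, ContinuousLinearMap.comp_apply,
      ContinuousLinearMap.coe_smul', Pi.smul_apply, innerSL_apply_apply, smul_eq_mul,
      fst2L_apply]
    rw [h3]
    ring
  rw [Finset.sum_congr rfl fun i _ => key i, Finset.sum_add_distrib,
    ← Finset.mul_sum, ← Finset.mul_sum]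
  -- trace identity
  have hfrob : frobSq (proj S - proj (P0 n m)) =
      (n : ℝ) + n - 2 * ∑ i, ⟪proj (P0 n m) (τ i), τ i⟫ := by
    rw [frobSq_proj_sub hτ hspan uP0_orthonormal uP0_span,
      cross_symm hτ hspan uP0_orthonormal uP0_span]
  -- norm identity
  have hnorm : ‖proj S (mk2 x 0)‖ ^ 2 = ∑ i, ⟪mk2 x 0, τ i⟫ ^ 2 := by
    rw [proj_normsq hτ hspan]
    exact Finset.sum_congr rfl fun i _ => by rw [real_inner_comm]
  rw [hfrob, hnorm]
  field_simp
  ring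
end
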